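/- Disjunction splits for purely probabilistic programs: let s be a purely probabilistic pGCL program (containing no demonic choice ⊓), ε a valuation, φ₁, φ₂ pDL formulae, and p an expectation lower bound. If ε ⊨ [s]_p (φ₁ ∨ φ₂), then there exist expectation lower bounds p₁, p₂ with p₁ + p₂ ≥ p everywhere such that ε ⊨ [s]_{p₁} φ₁ and ε ⊨ [s]_{p₂} φ₂. -/
import Mathlib


namespace PGCL

/-- Program valuations: maps from program variables to real values. -/
abbrev PVal : Type := String → ℝ

/-- Logical environments: maps from logical variables to their values.
    Logical variables are disjoint from program variables and cannot be
    accessed by programs. -/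
abbrev LEnv : Type := String → ℝ

/-- Syntax of the probabilistic guarded command language pGCL.
    Expressions are embedded shallowly as functions of the valuation. -/
inductive Stmt : Type
  | skip : Stmt
  | assign (x : String) (e : PVal → ℝ) : Stmt
  | seq (s₁ s₂ : Stmt) : Stmt
  /-- demonic (non-deterministic) choice `s₁ ⊓ s₂` -/
  | dem (s₁ s₂ : Stmt) : Stmt
  /-- probabilistic choice `s₁ [e] s₂` -/
  | prob (e : PVal → ℝ) (s₁ s₂ : Stmt) : Stmt
  | ifte (e : PVal → Bool) (s₁ s₂ : Stmt) : Stmt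
  | whileLoop (e : PVal → Bool) (s : Stmt) : Stmt

/-- States of the MDP semantics: a valuation paired with the remaining program.
    `(ε, Stmt.skip)` is final. -/
abbrev PState : Type := PVal × Stmt

/-- A positional policy resolves each demonic choice (true = left branch). -/
abbrev Policy : Type := PState → Bool

/-- One-step transition relation of the MDP semantics of pGCL, under policy `π`:
    `Step π σ p σ'` means σ steps to σ' with probability `p`. -/
inductive Step (π : Policy) : PState → ℝ → PState → Prop
  | assign {ε : PVal} {x : String} {e : PVal → ℝ} :
      Step π (ε, Stmt.assign x e) 1 (Function.update ε x (e ε), Stmt.skip)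
  | seqSkip {ε ε' : PVal} {s₁ s₂ : Stmt} {p : ℝ} :
      Step π (ε, s₁) p (ε', s₂) → Step π (ε, Stmt.seq Stmt.skip s₁) p (ε', s₂)
  | seqStep {ε ε' : PVal} {s₁ s₂ s : Stmt} {p : ℝ} :
      Step π (ε, s₁) p (ε', s₂) → Step π (ε, Stmt.seq s₁ s) p (ε', Stmt.seq s₂ s)
  | probL {ε : PVal} {e : PVal → ℝ} {s₁ s₂ : Stmt} :
      0 ≤ e ε → e ε ≤ 1 → Step π (ε, Stmt.prob e s₁ s₂) (e ε) (ε, s₁)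
  | probR {ε : PVal} {e : PVal → ℝ} {s₁ s₂ : Stmt} :
      0 ≤ e ε → e ε ≤ 1 → Step π (ε, Stmt.prob e s₁ s₂) (1 - e ε) (ε, s₂)
  | demL {ε : PVal} {s₁ s₂ : Stmt} :
      π (ε, Stmt.dem s₁ s₂) = true → Step π (ε, Stmt.dem s₁ s₂) 1 (ε, s₁)
  | demR {ε : PVal} {s₁ s₂ : Stmt} :
      π (ε, Stmt.dem s₁ s₂) = false → Step π (ε, Stmt.dem s₁ s₂) 1 (ε, s₂)
  | iteT {ε : PVal} {e : PVal → Bool} {s₁ s₂ : Stmt} :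
      e ε = true → Step π (ε, Stmt.ifte e s₁ s₂) 1 (ε, s₁)
  | iteF {ε : PVal} {e : PVal → Bool} {s₁ s₂ : Stmt} :
      e ε = false → Step π (ε, Stmt.ifte e s₁ s₂) 1 (ε, s₂)
  | whileT {ε : PVal} {e : PVal → Bool} {s : Stmt} :
      e ε = true →
        Step π (ε, Stmt.whileLoop e s) 1 (ε, Stmt.seq s (Stmt.whileLoop e s))
  | whileF {ε : PVal} {e : PVal → Bool} {s : Stmt} :
      e ε = false → Step π (ε, Stmt.whileLoop e s) 1 (ε, Stmt.skip)

/-- Finite paths under a policy `π` from a state to a final state. -/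
inductive MPath (π : Policy) : PState → Type
  | nil (ε : PVal) : MPath π (ε, Stmt.skip)
  | cons {σ σ' : PState} (p : ℝ) (h : Step π σ p σ') (rest : MPath π σ') : MPath π σ

/-- The probability of a path: the product of its transition probabilities. -/
noncomputable def MPath.prob {π : Policy} : {σ : PState} → MPath π σ → ℝ
  | _, .nil _ => 1
  | _, .cons p _ rest => p * rest.prob

/-- The valuation in the final state of a path. -/
def MPath.finalVal {π : Policy} : {σ : PState} → MPath π σ → PVal
  | _, .nil ε => ε
  | _, .cons _ _ rest => rest.finalVal

/-- Expected reward `E_{σ,π} r`: the sum over all paths from σ under π of the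
    probability of the path times the reward of its final valuation. -/
noncomputable def expReward (π : Policy) (σ : PState) (r : PVal → ℝ) : ℝ :=
  ∑' ρ : MPath π σ, ρ.prob * r ρ.finalVal

/-- Expectation `𝔼_σ r`: infimum over all policies of the expected reward. -/
noncomputable def expectation (σ : PState) (r : PVal → ℝ) : ℝ :=
  ⨅ π : Policy, expReward π σ r

open Classical in
/-- Characteristic (indicator) function of a proposition. -/
noncomputable def ind (P : Prop) : ℝ := if P then 1 else 0

/-- Formulae of probabilistic dynamic logic pDL. Atomic formulae are embedded
    shallowly as predicates over the program valuation and logical environment. -/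
inductive Formula : Type
  | atom (A : PVal → LEnv → Prop) : Formula
  | neg (φ : Formula) : Formula
  | conj (φ₁ φ₂ : Formula) : Formula
  /-- universal quantification over the logical variable `l` (domain ℝ) -/
  | all (l : String) (φ : Formula) : Formula
  /-- the p-box modality `[s]_p φ` -/
  | box (s : Stmt) (p : PVal → ℝ) (φ : Formula) : Formula

/-- Satisfaction `ε, η ⊨ φ` of pDL formulae. -/
def Sat : Formula → PVal → LEnv → Prop
  | .atom A, ε, η => A ε η
  | .neg φ, ε, η => ¬ Sat φ ε η
  | .conj φ₁ φ₂, ε, η => Sat φ₁ ε η ∧ Sat φ₂ ε η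
  | .all l φ, ε, η => ∀ v : ℝ, Sat φ ε (Function.update η l v)
  | .box s p φ, ε, η => p ε ≤ expectation (ε, s) (fun ε' => ind (Sat φ ε' η))

/-- Disjunction `φ₁ ∨ φ₂ := ¬(¬φ₁ ∧ ¬φ₂)`. -/
def Formula.disj (φ₁ φ₂ : Formula) : Formula := .neg (.conj (.neg φ₁) (.neg φ₂))

/-- Existential quantification `∃l·φ := ¬∀l·¬φ`. -/
def Formula.ex (l : String) (φ : Formula) : Formula := .neg (.all l (.neg φ))

/-- A program is purely probabilistic if it contains no demonic choice. -/
def DemFree : Stmt → Prop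
  | .skip => True
  | .assign _ _ => True
  | .seq s₁ s₂ => DemFree s₁ ∧ DemFree s₂
  | .dem _ _ => False
  | .prob _ s₁ s₂ => DemFree s₁ ∧ DemFree s₂
  | .ifte _ s₁ s₂ => DemFree s₁ ∧ DemFree s₂
  | .whileLoop _ s => DemFree s

end PGCL

open PGCL

namespace PGCL

lemma step_nonneg {π : Policy} {σ σ' : PState} {q : ℝ} (h : Step π σ q σ') : 0 ≤ q := by
  induction h with
  | assign => norm_num
  | seqSkip _ ih => exact ih
  | seqStep _ ih => exact ih
  | probL h0 h1 => exact h0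
  | probR h0 h1 => linarith
  | demL _ => norm_num
  | demR _ => norm_num
  | iteT _ => norm_num
  | iteF _ => norm_num
  | whileT _ => norm_num
  | whileF _ => norm_num

lemma MPath.prob_nonneg {π : Policy} : {σ : PState} → (ρ : MPath π σ) → 0 ≤ ρ.prob
  | _, .nil _ => by simp [MPath.prob]
  | _, .cons p h rest => by
      simpa [MPath.prob] using mul_nonneg (step_nonneg h) (rest.prob_nonneg)

lemma step_indep {π π' : Policy} {σ σ' : PState} {q : ℝ}
    (h : Step π σ q σ') (hdf : DemFree σ.2) : Step π' σ q σ' ∧ DemFree σ'.2 := by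
  induction h with
  | assign => exact ⟨Step.assign, trivial⟩
  | seqSkip _ ih =>
      obtain ⟨h1, h2⟩ := ih hdf.2
      exact ⟨Step.seqSkip h1, h2⟩
  | @seqStep ε ε' s₁ s₂ s q _ ih =>
      obtain ⟨h1, h2⟩ := ih hdf.1
      exact ⟨Step.seqStep h1, ⟨h2, hdf.2⟩⟩
  | probL h0 h1 => exact ⟨Step.probL h0 h1, hdf.1⟩
  | probR h0 h1 => exact ⟨Step.probR h0 h1, hdf.2⟩
  | demL _ => exact absurd hdf id
  | demR _ => exact absurd hdf id
  | iteT he => exact ⟨Step.iteT he, hdf.1⟩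
  | iteF he => exact ⟨Step.iteF he, hdf.2⟩
  | whileT he => exact ⟨Step.whileT he, ⟨hdf, hdf⟩⟩
  | whileF he => exact ⟨Step.whileF he, trivial⟩

def MPath.conv {π π' : Policy} : {σ : PState} → MPath π σ → DemFree σ.2 → MPath π' σ
  | _, .nil ε, _ => .nil ε
  | _, .cons p h rest, hdf =>
      .cons p (step_indep (π' := π') h hdf).1 (rest.conv (step_indep (π' := π') h hdf).2)

lemma MPath.conv_prob {π π' : Policy} : {σ : PState} → (ρ : MPath π σ) → (hdf : DemFree σ.2) →
    (ρ.conv (π' := π') hdf).prob = ρ.prob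
  | _, .nil _, _ => rfl
  | _, .cons p h rest, hdf => by
      simp only [MPath.conv, MPath.prob]
      rw [rest.conv_prob]

lemma MPath.conv_finalVal {π π' : Policy} : {σ : PState} → (ρ : MPath π σ) → (hdf : DemFree σ.2) →
    (ρ.conv (π' := π') hdf).finalVal = ρ.finalVal
  | _, .nil _, _ => rfl
  | _, .cons p h rest, hdf => by
      simp only [MPath.conv, MPath.finalVal]
      rw [rest.conv_finalVal]

lemma MPath.conv_conv {π π' : Policy} : {σ : PState} → (ρ : MPath π σ) → (hdf : DemFree σ.2) →
    ((ρ.conv (π' := π') hdf).conv hdf : MPath π σ) = ρ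
  | _, .nil _, _ => rfl
  | _, .cons p h rest, hdf => by
      simp only [MPath.conv]
      rw [rest.conv_conv]

noncomputable def convEquiv (π π' : Policy) (σ : PState) (hdf : DemFree σ.2) :
    MPath π σ ≃ MPath π' σ where
  toFun ρ := ρ.conv hdf
  invFun ρ := ρ.conv hdf
  left_inv ρ := ρ.conv_conv hdf
  right_inv ρ := ρ.conv_conv hdf

lemma expReward_indep (π π' : Policy) (σ : PState) (hdf : DemFree σ.2) (r : PVal → ℝ) :
    expReward π σ r = expReward π' σ r := by
  unfold expReward
  rw [← (convEquiv π π' σ hdf).tsum_eq (fun ρ : MPath π' σ => ρ.prob * r ρ.finalVal)]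
  congr 1
  funext ρ
  simp [convEquiv, ρ.conv_prob hdf, ρ.conv_finalVal hdf]

lemma expectation_eq (π : Policy) (σ : PState) (hdf : DemFree σ.2) (r : PVal → ℝ) :
    expectation σ r = expReward π σ r := by
  unfold expectation
  have : (fun π' : Policy => expReward π' σ r) = fun _ => expReward π σ r := by
    funext π'
    exact expReward_indep π' π σ hdf r
  rw [this, ciInf_const]

lemma ind_nonneg (P : Prop) : 0 ≤ ind P := by
  unfold ind; split <;> norm_num

lemma ind_le_one (P : Prop) : ind P ≤ 1 := by
  unfold ind; split <;> norm_num

lemma ind_mono {P Q : Prop} (h : P → Q) : ind P ≤ ind Q := by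
  unfold ind
  split
  · rw [if_pos (h (by assumption))]
  · exact ind_nonneg Q

end PGCL



/-- Disjunction splits for purely probabilistic programs:
    if `s` contains no demonic choice and `ε ⊨ [s]_p (φ₁ ∨ φ₂)`, then there
    exist expectation lower bounds `p₁, p₂` with `p₁ + p₂ ≥ p` everywhere such
    that `ε ⊨ [s]_{p₁} φ₁` and `ε ⊨ [s]_{p₂} φ₂`. -/
theorem disjunction_splits (s : Stmt) (hdf : DemFree s) (ε : PVal) (η : LEnv)
    (φ₁ φ₂ : Formula)
    (p : PVal → ℝ) (hp : ∀ ε', p ε' ∈ Set.Icc (0 : ℝ) 1)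
    (h : Sat (.box s p (Formula.disj φ₁ φ₂)) ε η) :
    ∃ p₁ p₂ : PVal → ℝ,
      (∀ ε', p₁ ε' ∈ Set.Icc (0 : ℝ) 1) ∧ (∀ ε', p₂ ε' ∈ Set.Icc (0 : ℝ) 1) ∧
      (∀ ε', p ε' ≤ p₁ ε' + p₂ ε') ∧
      Sat (.box s p₁ φ₁) ε η ∧ Sat (.box s p₂ φ₂) ε η := by
  classical
  set π₀ : Policy := fun _ => true with hπ₀
  set r₁ : PVal → ℝ := fun ε' => ind (Sat φ₁ ε' η) with hr₁
  set r₂ : PVal → ℝ := fun ε' => ind (Sat φ₂ ε' η) with hr₂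
  set rd : PVal → ℝ := fun ε' => ind (Sat (Formula.disj φ₁ φ₂) ε' η) with hrd
  set e₁ : ℝ := expectation (ε, s) r₁ with he₁
  set e₂ : ℝ := expectation (ε, s) r₂ with he₂
  have hdf' : DemFree (ε, s).2 := hdf
  have hE1 : e₁ = expReward π₀ (ε, s) r₁ := expectation_eq π₀ (ε, s) hdf' r₁
  have hE2 : e₂ = expReward π₀ (ε, s) r₂ := expectation_eq π₀ (ε, s) hdf' r₂
  have hEd : expectation (ε, s) rd = expReward π₀ (ε, s) rd :=
    expectation_eq π₀ (ε, s) hdf' rd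
  set f : MPath π₀ (ε, s) → ℝ := fun ρ => ρ.prob * r₁ ρ.finalVal with hf
  set g : MPath π₀ (ε, s) → ℝ := fun ρ => ρ.prob * r₂ ρ.finalVal with hg
  set L : MPath π₀ (ε, s) → ℝ := fun ρ => ρ.prob * rd ρ.finalVal with hL
  have hf0 : ∀ ρ, 0 ≤ f ρ := fun ρ => mul_nonneg ρ.prob_nonneg (ind_nonneg _)
  have hg0 : ∀ ρ, 0 ≤ g ρ := fun ρ => mul_nonneg ρ.prob_nonneg (ind_nonneg _)
  have hd1 : ∀ ε', Sat φ₁ ε' η → Sat (Formula.disj φ₁ φ₂) ε' η := by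
    intro ε' h1
    simp only [Formula.disj, Sat]
    intro hc
    exact hc.1 h1
  have hd2 : ∀ ε', Sat φ₂ ε' η → Sat (Formula.disj φ₁ φ₂) ε' η := by
    intro ε' h2
    simp only [Formula.disj, Sat]
    intro hc
    exact hc.2 h2
  have hfL : ∀ ρ, f ρ ≤ L ρ := fun ρ =>
    mul_le_mul_of_nonneg_left (ind_mono (hd1 _)) ρ.prob_nonneg
  have hgL : ∀ ρ, g ρ ≤ L ρ := fun ρ =>
    mul_le_mul_of_nonneg_left (ind_mono (hd2 _)) ρ.prob_nonneg
  have hLfg : ∀ ρ, L ρ ≤ f ρ + g ρ := by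
    intro ρ
    have hind : rd ρ.finalVal ≤ r₁ ρ.finalVal + r₂ ρ.finalVal := by
      simp only [hr₁, hr₂, hrd, Formula.disj, Sat, ind]
      by_cases h1 : Sat φ₁ ρ.finalVal η <;> by_cases h2 : Sat φ₂ ρ.finalVal η <;>
        simp [h1, h2]
    calc L ρ = ρ.prob * rd ρ.finalVal := rfl
      _ ≤ ρ.prob * (r₁ ρ.finalVal + r₂ ρ.finalVal) :=
          mul_le_mul_of_nonneg_left hind ρ.prob_nonneg
      _ = f ρ + g ρ := by ring
  -- key inequality: tsum L ≤ tsum f + tsum g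
  have hkey : expReward π₀ (ε, s) rd ≤ e₁ + e₂ := by
    rw [hE1, hE2]
    show (∑' ρ, L ρ) ≤ (∑' ρ, f ρ) + (∑' ρ, g ρ)
    by_cases hLs : Summable L
    · have hfs : Summable f := hLs.of_nonneg_of_le hf0 hfL
      have hgs : Summable g := hLs.of_nonneg_of_le hg0 hgL
      calc (∑' ρ, L ρ) ≤ ∑' ρ, (f ρ + g ρ) := Summable.tsum_le_tsum hLfg hLs (hfs.add hgs)
        _ = (∑' ρ, f ρ) + (∑' ρ, g ρ) := Summable.tsum_add hfs hgs
    · rw [tsum_eq_zero_of_not_summable hLs]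
      exact add_nonneg (tsum_nonneg hf0) (tsum_nonneg hg0)
  have hpe : p ε ≤ e₁ + e₂ := by
    have : p ε ≤ expectation (ε, s) rd := h
    calc p ε ≤ expectation (ε, s) rd := this
      _ = expReward π₀ (ε, s) rd := hEd
      _ ≤ e₁ + e₂ := hkey
  have he₁0 : 0 ≤ e₁ := by rw [hE1]; exact tsum_nonneg hf0
  have he₂0 : 0 ≤ e₂ := by rw [hE2]; exact tsum_nonneg hg0
  refine ⟨fun ε' => if ε' = ε then min 1 e₁ else p ε',
          fun ε' => if ε' = ε then min 1 e₂ else p ε', ?_, ?_, ?_, ?_, ?_⟩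
  · intro ε'
    by_cases hc : ε' = ε <;> simp [hc, hp ε', le_min_iff, he₁0, (hp ε').1, (hp ε').2]
  · intro ε'
    by_cases hc : ε' = ε <;> simp [hc, hp ε', le_min_iff, he₂0, (hp ε').1, (hp ε').2]
  · intro ε'
    by_cases hc : ε' = ε
    · subst hc
      beta_reduce
      rw [if_pos rfl, if_pos rfl]
      have hm1 : 0 ≤ min 1 e₁ := le_min zero_le_one he₁0
      have hm2 : 0 ≤ min 1 e₂ := le_min zero_le_one he₂0
      rcases le_total 1 e₁ with h1 | h1
      · rw [min_eq_left h1]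
        linarith [(hp ε').2]
      · rcases le_total 1 e₂ with h2 | h2
        · rw [min_eq_right h1, min_eq_left h2]
          linarith [(hp ε').2, he₁0]
        · rw [min_eq_right h1, min_eq_right h2]
          exact hpe
    · beta_reduce
      rw [if_neg hc, if_neg hc]
      linarith [(hp ε').1]
  · show (if ε = ε then min 1 e₁ else p ε) ≤ expectation (ε, s) r₁
    rw [if_pos rfl]
    exact min_le_right 1 e₁
  · show (if ε = ε then min 1 e₂ else p ε) ≤ expectation (ε, s) r₂
    rw [if_pos rfl]
    exact min_le_right 1 e₂
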